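/- arXiv:2006.04973 — 3 statements merged into one kernel-verified Lean document; each statement's English description precedes it below -/
import Mathlib

section
/- If the dyadic step function f_A^m with coefficient vector A ∈ ℝ^{2^m} satisfies the constraint system (8) (i.e., for every i ∈ {1,…,N}, y(t_i) = y(t₀)·e^{−(t_i−t₀)/τ} + (1/τ)·∫_{t₀}^{t_i} e^{(α−t_i)/τ}·f_A^m(α) dα), then A satisfies the linear system Y = V·A. -/
open MeasureTheory intervalIntegral

/-- The dyadic step function on `[t₀, tN)` determined by a coefficient vector
`A ∈ ℝ^(2^m)`: it takes the value `A k` on the interval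
`[t₀ + k·Δt/2^m, t₀ + (k+1)·Δt/2^m)` where `Δt = tN - t₀`, and `0` outside `[t₀, tN)`. -/
noncomputable def dyadicStep (t₀ tN : ℝ) (m : ℕ) (A : Fin (2 ^ m) → ℝ) (α : ℝ) : ℝ :=
  ∑ k : Fin (2 ^ m),
    if t₀ + ((k : ℕ) : ℝ) * (tN - t₀) / 2 ^ m ≤ α ∧
        α < t₀ + (((k : ℕ) : ℝ) + 1) * (tN - t₀) / 2 ^ m
    then A k else 0

lemma integral_exp_if (τ T a b c d C : ℝ) (hτ : 0 < τ) (hab : a ≤ b) (hac : a ≤ c) :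
    ∫ x in a..b, Real.exp ((x - T) / τ) * (if c ≤ x ∧ x < d then C else 0) =
      if c < min b d then
        τ * (Real.exp ((min b d - T) / τ) - Real.exp ((c - T) / τ)) * C else 0 := by
  have hfun : (fun x => Real.exp ((x - T) / τ) * (if c ≤ x ∧ x < d then C else 0)) =
      (Set.Ico c d).indicator (fun x => Real.exp ((x - T) / τ) * C) := by
    funext x
    simp [Set.indicator_apply, Set.mem_Ico, mul_ite]
  rw [hfun, intervalIntegral.integral_of_le hab]
  have hae : (Set.Ico c d).indicator (fun x => Real.exp ((x - T) / τ) * C) =ᵐ[volume]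
      (Set.Ioc c d).indicator (fun x => Real.exp ((x - T) / τ) * C) :=
    indicator_ae_eq_of_ae_eq_set (Ico_ae_eq_Ioc)
  rw [MeasureTheory.integral_congr_ae (Filter.EventuallyEq.filter_mono hae
    (ae_mono Measure.restrict_le_self))]
  rw [MeasureTheory.setIntegral_indicator measurableSet_Ioc, Set.Ioc_inter_Ioc,
    max_eq_right hac]
  by_cases h : c < min b d
  · rw [if_pos h, ← intervalIntegral.integral_of_le h.le]
    have hder : ∀ x ∈ Set.uIcc c (min b d),
        HasDerivAt (fun x => τ * Real.exp ((x - T) / τ) * C)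
          (Real.exp ((x - T) / τ) * C) x := by
      intro x _
      have h1 : HasDerivAt (fun x : ℝ => (x - T) / τ) (1 / τ) x := by
        simpa using ((hasDerivAt_id x).sub_const T).div_const τ
      have h2 := (h1.exp.const_mul τ).mul_const C
      refine h2.congr_deriv ?_
      field_simp
    rw [intervalIntegral.integral_eq_sub_of_hasDerivAt hder
      (((Real.continuous_exp.comp (by continuity)).mul continuous_const).intervalIntegrable _ _)]
    ring
  · rw [if_neg h, Set.Ioc_eq_empty h]
    simp

/-- Theorem 1 of the paper: if the dyadic step function `f_A^m`
satisfies the constraint system (8), then the coefficient vector `A` satisfies the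
linear system `Y = V·A`. -/
theorem constraints_imply_linear_system
    (τ : ℝ) (hτ : 0 < τ) (m N : ℕ)
    (t : Fin (N + 1) → ℝ) (ht : StrictMono t)
    (y : Fin (N + 1) → ℝ)
    (A : Fin (2 ^ m) → ℝ)
    (hconstr : ∀ i : Fin N,
      y i.succ = y 0 * Real.exp (-(t i.succ - t 0) / τ) +
        (1 / τ) * ∫ α in (t 0)..(t i.succ),
          Real.exp ((α - t i.succ) / τ) * dyadicStep (t 0) (t (Fin.last N)) m A α) :
    ∀ j : Fin N,
      y j.succ - y 0 * Real.exp (-(t j.succ - t 0) / τ) =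
      ∑ k : Fin (2 ^ m),
        (if ((k : ℕ) : ℝ) * (t (Fin.last N) - t 0) / (2 ^ m * τ) <
              min ((((k : ℕ) : ℝ) + 1) * (t (Fin.last N) - t 0) / (2 ^ m * τ))
                ((t j.succ - t 0) / τ)
          then Real.exp (-(t j.succ - t 0) / τ) *
              (Real.exp (min ((((k : ℕ) : ℝ) + 1) * (t (Fin.last N) - t 0) / (2 ^ m * τ))
                  ((t j.succ - t 0) / τ)) -
                Real.exp (((k : ℕ) : ℝ) * (t (Fin.last N) - t 0) / (2 ^ m * τ)))
          else 0) * A k := by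
  intro j
  have h2m : (0 : ℝ) < 2 ^ m := by positivity
  set t0 := t 0 with ht0
  set T := t j.succ with hT
  set tN := t (Fin.last N) with htN
  have h0T : t0 < T := ht (Fin.succ_pos j)
  have hTN : T ≤ tN := ht.monotone (Fin.le_last _)
  have hΔ : (0 : ℝ) ≤ tN - t0 := by linarith
  rw [hconstr j, add_sub_cancel_left]
  simp only [dyadicStep]
  simp_rw [Finset.mul_sum]
  rw [intervalIntegral.integral_finset_sum]
  · rw [Finset.mul_sum]
    refine Finset.sum_congr rfl fun k _ => ?_
    have hac : t0 ≤ t0 + ((k : ℕ) : ℝ) * (tN - t0) / 2 ^ m := by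
      have hk : (0 : ℝ) ≤ ((k : ℕ) : ℝ) := Nat.cast_nonneg _
      have := div_nonneg (mul_nonneg hk hΔ) h2m.le
      linarith
    rw [integral_exp_if τ T t0 T (t0 + ((k : ℕ) : ℝ) * (tN - t0) / 2 ^ m)
      (t0 + (((k : ℕ) : ℝ) + 1) * (tN - t0) / 2 ^ m) (A k) hτ h0T.le hac]
    set c := t0 + ((k : ℕ) : ℝ) * (tN - t0) / 2 ^ m with hc
    set d := t0 + (((k : ℕ) : ℝ) + 1) * (tN - t0) / 2 ^ m with hd
    have e1 : ((k : ℕ) : ℝ) * (tN - t0) / (2 ^ m * τ) = (c - t0) / τ := by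
      rw [hc]; field_simp; ring
    have e2 : (((k : ℕ) : ℝ) + 1) * (tN - t0) / (2 ^ m * τ) = (d - t0) / τ := by
      rw [hd]; field_simp; ring
    rw [e1, e2]
    have hmin : min ((d - t0) / τ) ((T - t0) / τ) = (min T d - t0) / τ := by
      rw [min_comm, show T ⊓ d - t0 = (T - t0) ⊓ (d - t0) from (min_sub_sub_right T d t0).symm]
      exact min_div_div_right hτ.le _ _
    rw [hmin]
    have hcond : c < min T d ↔ (c - t0) / τ < (min T d - t0) / τ := by
      rw [div_lt_div_iff_of_pos_right hτ, sub_lt_sub_iff_right]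
    by_cases h : c < min T d
    · rw [if_pos h, if_pos (hcond.mp h)]
      have v1 : Real.exp (-(T - t0) / τ) * Real.exp ((min T d - t0) / τ) =
          Real.exp ((min T d - T) / τ) := by
        rw [← Real.exp_add]; congr 1; ring
      have v2 : Real.exp (-(T - t0) / τ) * Real.exp ((c - t0) / τ) =
          Real.exp ((c - T) / τ) := by
        rw [← Real.exp_add]; congr 1; ring
      rw [mul_sub] at *
      rw [← v1, ← v2]
      field_simp
    · rw [if_neg h, if_neg (fun hh => h (hcond.mpr hh)), mul_zero, zero_mul]
  · intro k _
    have hfun : (fun x => Real.exp ((x - T) / τ) *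
        (if t0 + ((k : ℕ) : ℝ) * (tN - t0) / 2 ^ m ≤ x ∧
            x < t0 + (((k : ℕ) : ℝ) + 1) * (tN - t0) / 2 ^ m then A k else 0)) =
        (Set.Ico (t0 + ((k : ℕ) : ℝ) * (tN - t0) / 2 ^ m)
          (t0 + (((k : ℕ) : ℝ) + 1) * (tN - t0) / 2 ^ m)).indicator
          (fun x => Real.exp ((x - T) / τ) * A k) := by
      funext x
      simp [Set.indicator_apply, Set.mem_Ico, mul_ite]
    have hg : IntervalIntegrable (fun x => Real.exp ((x - T) / τ) * A k) volume t0 T :=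
      ((Real.continuous_exp.comp (by continuity)).mul continuous_const).intervalIntegrable t0 T
    rw [intervalIntegrable_iff] at hg ⊢
    rw [hfun]
    exact hg.indicator measurableSet_Ico
end

section
/- Conversely, if a coefficient vector A ∈ ℝ^{2^m} satisfies the linear system Y = V·A, then the dyadic step function f_A^m satisfies the constraint system (8): for every i ∈ {1,…,N}, y(t_i) = y(t₀)·e^{−(t_i−t₀)/τ} + (1/τ)·∫_{t₀}^{t_i} e^{(α−t_i)/τ}·f_A^m(α) dα. -/
open MeasureTheory intervalIntegral

lemma indicator_exp_integral (τ : ℝ) (hτ : 0 < τ) (t0 T a b : ℝ)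
    (ht0a : t0 ≤ a) (hT : t0 ≤ T) :
    ∫ α in t0..T, (Set.Ico a b).indicator (fun x => Real.exp ((x - T) / τ)) α
      = if a < min b T then τ * (Real.exp ((min b T - T) / τ) - Real.exp ((a - T) / τ))
        else 0 := by
  rw [intervalIntegral.integral_of_le hT, MeasureTheory.integral_indicator measurableSet_Ico,
    MeasureTheory.Measure.restrict_restrict measurableSet_Ico]
  have hset : ∫ x in Set.Ico a b ∩ Set.Ioc t0 T, Real.exp ((x - T) / τ)
      = ∫ x in Set.Ioc a (min b T), Real.exp ((x - T) / τ) := by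
    apply MeasureTheory.setIntegral_congr_set
    have h1 : (Set.Ico a b ∩ Set.Ioc t0 T : Set ℝ) =ᵐ[volume] (Set.Ioc a b ∩ Set.Ioc t0 T : Set ℝ) :=
      MeasureTheory.ae_eq_set_inter MeasureTheory.Ico_ae_eq_Ioc (by rfl)
    have h2 : Set.Ioc a b ∩ Set.Ioc t0 T = Set.Ioc a (min b T) := by
      rw [Set.Ioc_inter_Ioc, max_eq_left ht0a]
    rw [h2] at h1
    exact h1
  rw [hset]
  by_cases hac : a < min b T
  · rw [if_pos hac, ← intervalIntegral.integral_of_le hac.le]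
    have hderiv : ∀ x ∈ Set.uIcc a (min b T),
        HasDerivAt (fun x => τ * Real.exp ((x - T) / τ)) (Real.exp ((x - T) / τ)) x := by
      intro x _
      have h1 : HasDerivAt (fun x : ℝ => (x - T) / τ) (1 / τ) x := by
        simpa using ((hasDerivAt_id x).sub_const T).div_const τ
      have h2 : HasDerivAt (fun x => τ * Real.exp ((x - T) / τ))
          (τ * (Real.exp ((x - T) / τ) * (1 / τ))) x := (h1.exp).const_mul τ
      convert h2 using 1
      rw [one_div, ← mul_assoc, mul_comm τ, mul_assoc, mul_inv_cancel₀ hτ.ne', mul_one]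
    have hcont : Continuous fun x : ℝ => Real.exp ((x - T) / τ) :=
      Real.continuous_exp.comp ((continuous_id.sub continuous_const).div_const τ)
    rw [intervalIntegral.integral_eq_sub_of_hasDerivAt hderiv
      (hcont.intervalIntegrable _ _)]
    ring
  · rw [if_neg hac, Set.Ioc_eq_empty hac, MeasureTheory.Measure.restrict_empty,
      MeasureTheory.integral_zero_measure]


/-- converse direction of Theorem 1 of the paper: if the coefficient
vector `A` satisfies the linear system `Y = V·A`, then the dyadic step function `f_A^m`
satisfies the constraint system (8). -/
theorem linear_system_implies_constraints
    (τ : ℝ) (hτ : 0 < τ) (m N : ℕ)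
    (t : Fin (N + 1) → ℝ) (ht : StrictMono t)
    (y : Fin (N + 1) → ℝ)
    (A : Fin (2 ^ m) → ℝ)
    (hlin : ∀ j : Fin N,
      y j.succ - y 0 * Real.exp (-(t j.succ - t 0) / τ) =
      ∑ k : Fin (2 ^ m),
        (if ((k : ℕ) : ℝ) * (t (Fin.last N) - t 0) / (2 ^ m * τ) <
              min ((((k : ℕ) : ℝ) + 1) * (t (Fin.last N) - t 0) / (2 ^ m * τ))
                ((t j.succ - t 0) / τ)
          then Real.exp (-(t j.succ - t 0) / τ) *
              (Real.exp (min ((((k : ℕ) : ℝ) + 1) * (t (Fin.last N) - t 0) / (2 ^ m * τ))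
                  ((t j.succ - t 0) / τ)) -
                Real.exp (((k : ℕ) : ℝ) * (t (Fin.last N) - t 0) / (2 ^ m * τ)))
          else 0) * A k) :
    ∀ i : Fin N,
      y i.succ = y 0 * Real.exp (-(t i.succ - t 0) / τ) +
        (1 / τ) * ∫ α in (t 0)..(t i.succ),
          Real.exp ((α - t i.succ) / τ) * dyadicStep (t 0) (t (Fin.last N)) m A α := by
  intro i
  have hτ' : τ ≠ 0 := ne_of_gt hτ
  set t0 : ℝ := t 0 with ht0def
  set T : ℝ := t i.succ with hTdef
  set Δ : ℝ := t (Fin.last N) - t0 with hΔdef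
  have hT0 : t0 < T := ht (Fin.succ_pos i)
  have hΔ0 : 0 ≤ Δ := sub_nonneg.2 (ht.monotone (Fin.le_last _))
  -- abbreviations for the dyadic grid
  set a : Fin (2 ^ m) → ℝ := fun k => t0 + ((k : ℕ) : ℝ) * Δ / 2 ^ m with hadef
  set b : Fin (2 ^ m) → ℝ := fun k => t0 + (((k : ℕ) : ℝ) + 1) * Δ / 2 ^ m with hbdef
  have ht0a : ∀ k : Fin (2 ^ m), t0 ≤ a k := by
    intro k
    have : (0 : ℝ) ≤ ((k : ℕ) : ℝ) * Δ / 2 ^ m := by positivity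
    simp [hadef]
    linarith
  -- rewrite the integrand as a finite sum of indicator functions
  have hintegrand : ∀ α : ℝ,
      Real.exp ((α - T) / τ) * dyadicStep t0 (t (Fin.last N)) m A α
        = ∑ k : Fin (2 ^ m),
            (Set.Ico (a k) (b k)).indicator (fun x => Real.exp ((x - T) / τ)) α * A k := by
    intro α
    unfold dyadicStep
    rw [Finset.mul_sum]
    apply Finset.sum_congr rfl
    intro k _
    simp only [hadef, hbdef, Set.indicator_apply, Set.mem_Ico]
    split_ifs <;> ring
  have hint : ∀ k ∈ Finset.univ (α := Fin (2 ^ m)), IntervalIntegrable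
      (fun α => (Set.Ico (a k) (b k)).indicator (fun x => Real.exp ((x - T) / τ)) α * A k)
      volume t0 T := by
    intro k _
    apply IntervalIntegrable.mul_const
    have hcont : Continuous fun x : ℝ => Real.exp ((x - T) / τ) :=
      Real.continuous_exp.comp ((continuous_id.sub continuous_const).div_const τ)
    have h := hcont.intervalIntegrable (μ := volume) t0 T
    rw [intervalIntegrable_iff] at h ⊢
    exact h.indicator measurableSet_Ico
  have hintegral : ∫ α in t0..T, Real.exp ((α - T) / τ) * dyadicStep t0 (t (Fin.last N)) m A α
      = ∑ k : Fin (2 ^ m),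
          (if a k < min (b k) T then
              τ * (Real.exp ((min (b k) T - T) / τ) - Real.exp ((a k - T) / τ))
            else 0) * A k := by
    rw [intervalIntegral.integral_congr (g := fun α => ∑ k : Fin (2 ^ m),
      (Set.Ico (a k) (b k)).indicator (fun x => Real.exp ((x - T) / τ)) α * A k)
      (fun α _ => hintegrand α)]
    rw [intervalIntegral.integral_finset_sum hint]
    apply Finset.sum_congr rfl
    intro k _
    rw [intervalIntegral.integral_mul_const,
      indicator_exp_integral τ hτ t0 T (a k) (b k) (ht0a k) hT0.le]
  -- now match terms with the linear system
  have hmatch : ∀ k : Fin (2 ^ m),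
      (1 / τ) * ((if a k < min (b k) T then
          τ * (Real.exp ((min (b k) T - T) / τ) - Real.exp ((a k - T) / τ))
        else 0) * A k)
      = (if ((k : ℕ) : ℝ) * Δ / (2 ^ m * τ) <
            min ((((k : ℕ) : ℝ) + 1) * Δ / (2 ^ m * τ)) ((T - t0) / τ)
          then Real.exp (-(T - t0) / τ) *
              (Real.exp (min ((((k : ℕ) : ℝ) + 1) * Δ / (2 ^ m * τ)) ((T - t0) / τ)) -
                Real.exp (((k : ℕ) : ℝ) * Δ / (2 ^ m * τ)))
          else 0) * A k := by
    intro k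
    have hak : (a k - t0) / τ = ((k : ℕ) : ℝ) * Δ / (2 ^ m * τ) := by
      simp only [hadef]
      field_simp
      ring
    have hbk : (b k - t0) / τ = (((k : ℕ) : ℝ) + 1) * Δ / (2 ^ m * τ) := by
      simp only [hbdef]
      field_simp
      ring
    have hck : (min (b k) T - t0) / τ
        = min ((((k : ℕ) : ℝ) + 1) * Δ / (2 ^ m * τ)) ((T - t0) / τ) := by
      rw [← hbk, ← min_sub_sub_right, min_div_div_right hτ.le]
    have hcond : (a k < min (b k) T) ↔
        (((k : ℕ) : ℝ) * Δ / (2 ^ m * τ) <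
          min ((((k : ℕ) : ℝ) + 1) * Δ / (2 ^ m * τ)) ((T - t0) / τ)) := by
      rw [← hak, ← hck, div_lt_div_iff_of_pos_right hτ, sub_lt_sub_iff_right]
    by_cases hC : a k < min (b k) T
    · rw [if_pos hC, if_pos (hcond.1 hC)]
      have e1 : (min (b k) T - T) / τ = -(T - t0) / τ + (min (b k) T - t0) / τ := by ring
      have e2 : (a k - T) / τ = -(T - t0) / τ + (a k - t0) / τ := by ring
      rw [e1, e2, Real.exp_add, Real.exp_add, hck, hak]
      field_simp
    · rw [if_neg hC, if_neg (fun h => hC (hcond.2 h))]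
      ring
  -- conclude
  have hl := hlin i
  rw [hintegral, Finset.mul_sum]
  have : ∑ k : Fin (2 ^ m), (1 / τ) * ((if a k < min (b k) T then
          τ * (Real.exp ((min (b k) T - T) / τ) - Real.exp ((a k - T) / τ))
        else 0) * A k) = y i.succ - y 0 * Real.exp (-(T - t0) / τ) := by
    rw [hl]
    exact Finset.sum_congr rfl fun k _ => hmatch k
  rw [this]
  ring
end

section
/- Suppose for some i ∈ {0,…,N−1} there exist indices 0 ≤ p < q < 2^m such that both dyadic intervals [t₀ + p·Δt/2^m, t₀ + (p+1)·Δt/2^m) and [t₀ + q·Δt/2^m, t₀ + (q+1)·Δt/2^m) are contained in [t_i, t_{i+1}). Then the vector w ∈ ℝ^{2^m} with w_p = e^{(q+1)·Δt/(2^m·τ)} − e^{q·Δt/(2^m·τ)}, w_q = −(e^{(p+1)·Δt/(2^m·τ)} − e^{p·Δt/(2^m·τ)}), and all other components zero, is nonzero and satisfies V·w = 0. Consequently, if the linear system Y = V·A has a solution, it has infinitely many solutions. -/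
/-- Section IV, first observation of the paper: if two dyadic
intervals of level `m` fit inside one sampling interval `[t_i, t_{i+1})`, then the
matrix `V` of Theorem 1 has a nonzero null vector `w` supported on those two indices,
so if the linear system `Y = V·A` has a solution it has infinitely many. -/
theorem linear_system_underdetermined
    (τ : ℝ) (hτ : 0 < τ) (m N : ℕ)
    (t : Fin (N + 1) → ℝ) (ht : StrictMono t)
    (y : Fin (N + 1) → ℝ)
    (V : Matrix (Fin N) (Fin (2 ^ m)) ℝ)
    (hV : ∀ (j : Fin N) (k : Fin (2 ^ m)),
      V j k =
        if ((k : ℕ) : ℝ) * (t (Fin.last N) - t 0) / (2 ^ m * τ) <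
            min ((((k : ℕ) : ℝ) + 1) * (t (Fin.last N) - t 0) / (2 ^ m * τ))
              ((t j.succ - t 0) / τ)
        then Real.exp (-(t j.succ - t 0) / τ) *
            (Real.exp (min ((((k : ℕ) : ℝ) + 1) * (t (Fin.last N) - t 0) / (2 ^ m * τ))
                ((t j.succ - t 0) / τ)) -
              Real.exp (((k : ℕ) : ℝ) * (t (Fin.last N) - t 0) / (2 ^ m * τ)))
        else 0)
    (Y : Fin N → ℝ)
    (hY : ∀ j : Fin N, Y j = y j.succ - y 0 * Real.exp (-(t j.succ - t 0) / τ))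
    (i : Fin N) (p q : ℕ) (hpq : p < q) (hq : q < 2 ^ m)
    (hp_sub : Set.Ico (t 0 + (p : ℝ) * (t (Fin.last N) - t 0) / 2 ^ m)
        (t 0 + ((p : ℝ) + 1) * (t (Fin.last N) - t 0) / 2 ^ m) ⊆
      Set.Ico (t i.castSucc) (t i.succ))
    (hq_sub : Set.Ico (t 0 + (q : ℝ) * (t (Fin.last N) - t 0) / 2 ^ m)
        (t 0 + ((q : ℝ) + 1) * (t (Fin.last N) - t 0) / 2 ^ m) ⊆
      Set.Ico (t i.castSucc) (t i.succ))
    (w : Fin (2 ^ m) → ℝ)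
    (hw : ∀ k : Fin (2 ^ m),
      w k =
        if (k : ℕ) = p then
          Real.exp (((q : ℝ) + 1) * (t (Fin.last N) - t 0) / (2 ^ m * τ)) -
            Real.exp ((q : ℝ) * (t (Fin.last N) - t 0) / (2 ^ m * τ))
        else if (k : ℕ) = q then
          -(Real.exp (((p : ℝ) + 1) * (t (Fin.last N) - t 0) / (2 ^ m * τ)) -
            Real.exp ((p : ℝ) * (t (Fin.last N) - t 0) / (2 ^ m * τ)))
        else 0) :
    w ≠ 0 ∧ V.mulVec w = 0 ∧
      ((∃ A : Fin (2 ^ m) → ℝ, V.mulVec A = Y) →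
        {A : Fin (2 ^ m) → ℝ | V.mulVec A = Y}.Infinite) := by

  have hNpos : 0 < N := i.pos
  have hΔ : 0 < t (Fin.last N) - t 0 := by
    refine sub_pos.2 (ht ?_)
    rw [Fin.lt_def]
    simpa using hNpos
  set Δ := t (Fin.last N) - t 0 with hΔdef
  have h2m : (0:ℝ) < 2 ^ m := by positivity
  have hden : (0:ℝ) < 2 ^ m * τ := by positivity
  have hp2 : p < 2 ^ m := hpq.trans hq
  set pk : Fin (2 ^ m) := ⟨p, hp2⟩ with hpk
  set qk : Fin (2 ^ m) := ⟨q, hq⟩ with hqk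
  have hpkq : pk ≠ qk := by simp [hpk, hqk, Fin.ext_iff, hpq.ne]
  -- endpoint facts
  have hIp : t i.castSucc ≤ t 0 + (p : ℝ) * Δ / 2 ^ m ∧
      t 0 + ((p : ℝ) + 1) * Δ / 2 ^ m ≤ t i.succ := by
    have hd : ((p:ℝ)+1) * Δ / 2 ^ m - (p:ℝ) * Δ / 2 ^ m = Δ / 2 ^ m := by ring
    have hlt : t 0 + (p:ℝ) * Δ / 2 ^ m < t 0 + ((p:ℝ)+1) * Δ / 2 ^ m := by
      have := div_pos hΔ h2m
      linarith
    exact (Set.Ico_subset_Ico_iff hlt).1 hp_sub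
  have hIq : t i.castSucc ≤ t 0 + (q : ℝ) * Δ / 2 ^ m ∧
      t 0 + ((q : ℝ) + 1) * Δ / 2 ^ m ≤ t i.succ := by
    have hd : ((q:ℝ)+1) * Δ / 2 ^ m - (q:ℝ) * Δ / 2 ^ m = Δ / 2 ^ m := by ring
    have hlt : t 0 + (q:ℝ) * Δ / 2 ^ m < t 0 + ((q:ℝ)+1) * Δ / 2 ^ m := by
      have := div_pos hΔ h2m
      linarith
    exact (Set.Ico_subset_Ico_iff hlt).1 hq_sub
  -- values of w
  have hwp : w pk = Real.exp (((q : ℝ) + 1) * Δ / (2 ^ m * τ)) -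
      Real.exp ((q : ℝ) * Δ / (2 ^ m * τ)) := by
    rw [hw pk]
    simp [hpk]
  have hwq : w qk = -(Real.exp (((p : ℝ) + 1) * Δ / (2 ^ m * τ)) -
      Real.exp ((p : ℝ) * Δ / (2 ^ m * τ))) := by
    rw [hw qk]
    simp [hqk, hpq.ne']
  have hwp_pos : 0 < w pk := by
    rw [hwp]
    have : (q : ℝ) * Δ / (2 ^ m * τ) < ((q : ℝ) + 1) * Δ / (2 ^ m * τ) := by
      have hd : ((q:ℝ)+1) * Δ / (2 ^ m * τ) - (q:ℝ) * Δ / (2 ^ m * τ) = Δ / (2 ^ m * τ) := by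
        ring
      have := div_pos hΔ hden
      linarith
    have := Real.exp_lt_exp.2 this
    linarith
  have hwp_ne : w pk ≠ 0 := ne_of_gt hwp_pos
  have hwne : w ≠ 0 := by
    intro h
    exact hwp_ne (by rw [h]; rfl)
  -- the key row computation
  have key : ∀ j : Fin N, V j pk * w pk + V j qk * w qk = 0 := by
    intro j
    rcases lt_or_ge (j : ℕ) (i : ℕ) with hj | hj
    · -- row before i : both entries vanish
      have hle : j.succ ≤ i.castSucc := by
        rw [Fin.le_def]
        simp only [Fin.val_succ, Fin.coe_castSucc]
        omega
      have h1 : t j.succ ≤ t 0 + (p : ℝ) * Δ / 2 ^ m :=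
        le_trans (ht.monotone hle) hIp.1
      have ha : (t j.succ - t 0) / τ ≤ (p : ℝ) * Δ / (2 ^ m * τ) := by
        rw [← div_div]
        exact div_le_div_of_nonneg_right (by linarith) hτ.le
      have hapq : (p : ℝ) * Δ / (2 ^ m * τ) ≤ (q : ℝ) * Δ / (2 ^ m * τ) := by
        have hpq' : (p : ℝ) ≤ q := by exact_mod_cast hpq.le
        have hd : (q:ℝ) * Δ / (2 ^ m * τ) - (p:ℝ) * Δ / (2 ^ m * τ)
            = ((q:ℝ) - p) * (Δ / (2 ^ m * τ)) := by ring
        nlinarith [div_pos hΔ hden]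
      have hVp : V j pk = 0 := by
        rw [hV j pk, if_neg]
        simp only [hpk, Fin.val_mk]
        exact not_lt.2 (le_trans (min_le_right _ _) ha)
      have hVq : V j qk = 0 := by
        rw [hV j qk, if_neg]
        simp only [hqk, Fin.val_mk]
        exact not_lt.2 (le_trans (min_le_right _ _) (ha.trans hapq))
      rw [hVp, hVq]; ring
    · -- row at or after i : the two terms cancel
      have hle : i.succ ≤ j.succ := by
        rw [Fin.le_def]
        simp only [Fin.val_succ]
        omega
      have h1 : t 0 + ((q : ℝ) + 1) * Δ / 2 ^ m ≤ t j.succ :=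
        le_trans hIq.2 (ht.monotone hle)
      have ha : ((q : ℝ) + 1) * Δ / (2 ^ m * τ) ≤ (t j.succ - t 0) / τ := by
        rw [← div_div]
        exact div_le_div_of_nonneg_right (by linarith) hτ.le
      have hpq1 : ((p : ℝ) + 1) * Δ / (2 ^ m * τ) ≤ ((q : ℝ) + 1) * Δ / (2 ^ m * τ) := by
        have hpq' : (p : ℝ) ≤ q := by exact_mod_cast hpq.le
        have hd : ((q:ℝ)+1) * Δ / (2 ^ m * τ) - ((p:ℝ)+1) * Δ / (2 ^ m * τ)
            = ((q:ℝ) - p) * (Δ / (2 ^ m * τ)) := by ring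
        nlinarith [div_pos hΔ hden]
      have hminp : min (((p : ℝ) + 1) * Δ / (2 ^ m * τ)) ((t j.succ - t 0) / τ)
          = ((p : ℝ) + 1) * Δ / (2 ^ m * τ) := min_eq_left (hpq1.trans ha)
      have hminq : min (((q : ℝ) + 1) * Δ / (2 ^ m * τ)) ((t j.succ - t 0) / τ)
          = ((q : ℝ) + 1) * Δ / (2 ^ m * τ) := min_eq_left ha
      have hstep : ∀ r : ℕ, (r : ℝ) * Δ / (2 ^ m * τ) < ((r : ℝ) + 1) * Δ / (2 ^ m * τ) := by
        intro r
        have hd : ((r:ℝ)+1) * Δ / (2 ^ m * τ) - (r:ℝ) * Δ / (2 ^ m * τ)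
            = Δ / (2 ^ m * τ) := by ring
        have := div_pos hΔ hden
        linarith
      have hVp : V j pk = Real.exp (-(t j.succ - t 0) / τ) *
          (Real.exp (((p : ℝ) + 1) * Δ / (2 ^ m * τ)) -
            Real.exp ((p : ℝ) * Δ / (2 ^ m * τ))) := by
        rw [hV j pk]
        simp only [hpk, Fin.val_mk]
        rw [hminp, if_pos (hstep p)]
      have hVq : V j qk = Real.exp (-(t j.succ - t 0) / τ) *
          (Real.exp (((q : ℝ) + 1) * Δ / (2 ^ m * τ)) -
            Real.exp ((q : ℝ) * Δ / (2 ^ m * τ))) := by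
        rw [hV j qk]
        simp only [hqk, Fin.val_mk]
        rw [hminq, if_pos (hstep q)]
      rw [hVp, hVq, hwp, hwq]; ring
  -- V.mulVec w = 0
  have hVw : V.mulVec w = 0 := by
    funext j
    have hmv : V.mulVec w j = ∑ k, V j k * w k := rfl
    have hzero : ∀ k ∈ (Finset.univ : Finset (Fin (2 ^ m))),
        k ∉ ({pk, qk} : Finset (Fin (2 ^ m))) → V j k * w k = 0 := by
      intro k _ hk
      simp only [Finset.mem_insert, Finset.mem_singleton, not_or] at hk
      rw [hw k, if_neg, if_neg]
      · ring
      · intro h; exact hk.2 (by rw [hqk]; exact Fin.ext h)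
      · intro h; exact hk.1 (by rw [hpk]; exact Fin.ext h)
    have hsub : ∑ k ∈ ({pk, qk} : Finset (Fin (2 ^ m))), V j k * w k
        = ∑ k, V j k * w k :=
      Finset.sum_subset (Finset.subset_univ _) hzero
    have hpair : ∑ k ∈ ({pk, qk} : Finset (Fin (2 ^ m))), V j k * w k
        = V j pk * w pk + V j qk * w qk := Finset.sum_pair hpkq
    have : V.mulVec w j = V j pk * w pk + V j qk * w qk := by
      rw [hmv, ← hsub, hpair]
    rw [this, key j]
    rfl
  refine ⟨hwne, hVw, ?_⟩
  rintro ⟨A, hA⟩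
  apply Set.infinite_of_injective_forall_mem (f := fun s : ℝ => A + s • w)
  · intro s s' h
    have h2 : s • w = s' • w := by
      have := congrArg (fun v => v - A) h
      simpa [add_sub_cancel_left] using this
    have h3 : s * w pk = s' * w pk := congrFun h2 pk
    exact mul_right_cancel₀ hwp_ne h3
  · intro s
    simp only [Set.mem_setOf_eq, Matrix.mulVec_add, Matrix.mulVec_smul, hVw, hA,
      smul_zero, add_zero]
end
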